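/- Let 0 < r₁ < 1 < R₁ and let U ⊆ ℂ be an open set containing the closed annulus {z ∈ ℂ : r₁ ≤ |z| ≤ R₁}. Let τ : ℂ → ℂ be complex differentiable on U with τ(z) ≠ 0 for all z ∈ U, suppose |τ(z)| = 1 for every z with |z| = 1, and suppose there is α > 1 with |τ'(z)| ≥ α for all z in the closed annulus. Then there exist r and R with r₁ ≤ r < 1 < R ≤ R₁ such that for every z with |z| = r or |z| = R one has |τ(z)| < r or |τ(z)| > R; that is, the image under τ of the boundary of the annulus {r ≤ |z| ≤ R} is disjoint from that closed annulus. -/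

import Mathlib

set_option maxHeartbeats 1000000

open Complex Set Metric

lemma circle_tangent {τ : ℂ → ℂ} {U : Set ℂ} (hdiff : ∀ z ∈ U, DifferentiableAt ℂ τ z)
    (hmod : ∀ z : ℂ, ‖z‖ = 1 → ‖τ z‖ = 1)
    (hcirc : ∀ z : ℂ, ‖z‖ = 1 → z ∈ U)
    {w : ℂ} (hw : ‖w‖ = 1) :
    ((starRingEnd ℂ) (τ w) * w * deriv τ w).im = 0 := by
  have habs : ∀ θ : ℝ, ‖Complex.exp (θ * I)‖ = 1 := by
    intro θ
    rw [Complex.norm_exp]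
    simp
  set E : ℝ → ℂ := fun θ => Complex.exp (θ * I) with hE
  have hEderiv : ∀ θ : ℝ, HasDerivAt E (E θ * I) θ := by
    intro θ
    have h1 : HasDerivAt (fun θ : ℝ => (θ : ℂ) * I) I θ := by
      simpa using (Complex.ofRealCLM.hasDerivAt (x := θ)).mul_const I
    simpa using h1.cexp
  have hG : ∀ θ : ℝ, Complex.normSq (τ (E θ)) = 1 := by
    intro θ
    have := hmod _ (habs θ)
    rw [← Complex.sq_norm, this]; norm_num
  set θ₀ : ℝ := Complex.arg w with hθ₀
  have hwE : E θ₀ = w := by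
    have := Complex.norm_mul_exp_arg_mul_I w
    rw [hw] at this
    simpa [hE] using this
  have hF : HasDerivAt (fun θ => τ (E θ)) (deriv τ w * (w * I)) θ₀ := by
    have hU : E θ₀ ∈ U := hcirc _ (habs θ₀)
    have hd := ((hdiff _ hU).hasDerivAt).complexToReal_fderiv
    have := hd.comp_hasDerivAt θ₀ (hEderiv θ₀)
    simpa [Function.comp_def, hwE, smul_eq_mul, mul_comm] using this
  set X : ℂ := deriv τ w * (w * I) with hX
  have hre : HasDerivAt (fun θ => (τ (E θ)).re) X.re θ₀ :=
    (Complex.reCLM.hasFDerivAt.comp_hasDerivAt θ₀ hF :)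
  have him : HasDerivAt (fun θ => (τ (E θ)).im) X.im θ₀ :=
    (Complex.imCLM.hasFDerivAt.comp_hasDerivAt θ₀ hF :)
  have hGd : HasDerivAt (fun θ => Complex.normSq (τ (E θ)))
      ((τ w).re * X.re + (τ w).re * X.re + ((τ w).im * X.im + (τ w).im * X.im)) θ₀ := by
    have := (hre.mul hre).add (him.mul him)
    simpa [Pi.mul_def, Pi.add_def, Complex.normSq_apply, hwE, mul_comm, add_comm] using this
  have hconst : HasDerivAt (fun θ => Complex.normSq (τ (E θ))) 0 θ₀ := by
    have : (fun θ => Complex.normSq (τ (E θ))) = fun _ => (1 : ℝ) := funext hG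
    rw [this]; exact hasDerivAt_const θ₀ 1
  have key : (τ w).re * X.re + (τ w).im * X.im = 0 := by
    have := hGd.unique hconst
    linarith
  simp only [hX, Complex.mul_re, Complex.mul_im, Complex.I_re, Complex.I_im,
    Complex.conj_re, Complex.conj_im] at key ⊢
  ring_nf at key ⊢
  linarith

theorem annulus_boundary_mapped_outside (r₁ R₁ : ℝ) (hr₁ : 0 < r₁) (hr₁1 : r₁ < 1)
    (hR₁ : 1 < R₁) (U : Set ℂ) (hU : IsOpen U)
    (hsub : {z : ℂ | r₁ ≤ ‖z‖ ∧ ‖z‖ ≤ R₁} ⊆ U)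
    (τ : ℂ → ℂ) (hdiff : ∀ z ∈ U, DifferentiableAt ℂ τ z)
    (hne : ∀ z ∈ U, τ z ≠ 0)
    (hmod : ∀ z : ℂ, ‖z‖ = 1 → ‖τ z‖ = 1)
    (α : ℝ) (hα : 1 < α)
    (hexp : ∀ z : ℂ, r₁ ≤ ‖z‖ → ‖z‖ ≤ R₁ → α ≤ ‖deriv τ z‖) :
    ∃ r R : ℝ, r₁ ≤ r ∧ r < 1 ∧ 1 < R ∧ R ≤ R₁ ∧
      ∀ z : ℂ, (‖z‖ = r ∨ ‖z‖ = R) →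
        (‖τ z‖ < r ∨ R < ‖τ z‖) := by
  -- the closed annulus is compact
  set K : Set ℂ := {z : ℂ | r₁ ≤ ‖z‖ ∧ ‖z‖ ≤ R₁} with hKdef
  have hKc : IsCompact K := by
    apply Metric.isCompact_of_isClosed_isBounded
    · have : K = (fun z : ℂ => ‖z‖) ⁻¹' (Set.Icc r₁ R₁) := by ext z; simp [hKdef, Set.mem_Icc]
      rw [this]
      exact isClosed_Icc.preimage continuous_norm
    · apply (Metric.isBounded_closedBall (x := (0:ℂ)) (r := R₁)).subset
      intro z hz
      simp only [Metric.mem_closedBall, Complex.dist_eq, sub_zero]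
      exact hz.2
  obtain ⟨ρ, hρpos, hρ⟩ := hKc.exists_thickening_subset_open hU hsub
  set K' : Set ℂ := Metric.cthickening (ρ/2) K with hK'def
  have hK'c : IsCompact K' := hKc.cthickening
  have hKK' : K ⊆ K' := Metric.self_subset_cthickening K
  have hK'U : K' ⊆ U :=
    (Metric.cthickening_subset_thickening' hρpos (half_lt_self hρpos) K).trans hρ
  -- deriv τ is continuous on U
  have hdOn : DifferentiableOn ℂ τ U := fun z hz => (hdiff z hz).differentiableWithinAt
  have hderivCont : ContinuousOn (deriv τ) U := ((hdOn.analyticOnNhd hU).deriv).continuousOn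
  -- uniform continuity on K'
  set δ : ℝ := (α - 1) / 2 with hδdef
  have hδ : 0 < δ := by simp [hδdef]; linarith
  obtain ⟨ε₀, hε₀, hUC⟩ := Metric.uniformContinuousOn_iff.mp
    (hK'c.uniformContinuousOn_of_continuous (hderivCont.mono hK'U)) δ hδ
  -- bound on deriv τ
  obtain ⟨M, hM⟩ := hK'c.exists_bound_of_continuousOn (hderivCont.mono hK'U)
  have hM0 : 0 ≤ M := by
    have h1K : (1:ℂ) ∈ K := by constructor <;> simp <;> linarith
    exact (norm_nonneg _).trans (hM 1 (hKK' h1K))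
  -- choice of ε
  set ε : ℝ := min (min (1 - r₁) (R₁ - 1)) (min (min (ρ/2) (ε₀/2)) (1/(M+2))) with hεdef
  have hεpos : 0 < ε := by
    apply lt_min (lt_min (by linarith) (by linarith))
    apply lt_min (lt_min (by linarith) (by linarith))
    positivity
  have hε1 : ε ≤ 1 - r₁ := (min_le_left _ _).trans (min_le_left _ _)
  have hε2 : ε ≤ R₁ - 1 := (min_le_left _ _).trans (min_le_right _ _)
  have hε3 : ε ≤ ρ/2 := (min_le_right _ _).trans ((min_le_left _ _).trans (min_le_left _ _))
  have hε4 : ε ≤ ε₀/2 := (min_le_right _ _).trans ((min_le_left _ _).trans (min_le_right _ _))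
  have hε5 : ε ≤ 1/(M+2) := (min_le_right _ _).trans (min_le_right _ _)
  have hεM : ε * M < 1 := by
    have : ε * M ≤ (1/(M+2)) * M := by
      apply mul_le_mul_of_nonneg_right hε5 hM0
    have h2 : (1/(M+2)) * M < 1 := by
      rw [div_mul_eq_mul_div, div_lt_one (by linarith)]
      linarith
    linarith
  have hεlt1 : ε < 1 := by linarith
  refine ⟨1 - ε, 1 + ε, by linarith, by linarith, by linarith, by linarith, ?_⟩
  intro z hz
  set s : ℝ := ‖z‖ with hsdef
  have hspos : 0 < s := by
    rcases hz with h | h <;> rw [h] <;> linarith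
  have hsδ : |s - 1| = ε := by
    rcases hz with h | h <;> rw [h]
    · rw [_root_.abs_of_nonpos (by linarith)]; ring
    · rw [_root_.abs_of_nonneg (by linarith)]; ring
  set w : ℂ := (↑s)⁻¹ * z with hwdef
  have hsne : (↑s : ℂ) ≠ 0 := by exact_mod_cast hspos.ne'
  have hw : ‖w‖ = 1 := by
    rw [hwdef, norm_mul, norm_inv, Complex.norm_real, Real.norm_eq_abs, _root_.abs_of_pos hspos, ← hsdef]
    field_simp
  have hzw : z = ↑s * w := by rw [hwdef]; field_simp
  -- points on the segment
  set ℓ : ℝ → ℂ := fun t => (1 + ↑t * (↑s - 1)) * w with hℓdef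
  have hℓ0 : ℓ 0 = w := by simp [hℓdef]
  have hℓ1 : ℓ 1 = z := by rw [hℓdef, hzw]; push_cast; ring_nf
  have hℓabs : ∀ t : ℝ, ‖ℓ t‖ = |1 + t * (s - 1)| := by
    intro t
    have : (1 + (↑t : ℂ) * (↑s - 1)) = ((1 + t * (s-1) : ℝ) : ℂ) := by push_cast; ring
    rw [hℓdef]; simp only [norm_mul, this, Complex.norm_real, Real.norm_eq_abs, hw, mul_one]
  have hrange : ∀ t ∈ Set.Icc (0:ℝ) 1, 1 - ε ≤ 1 + t * (s-1) ∧ 1 + t * (s-1) ≤ 1 + ε := by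
    intro t ht
    have h1 : |t * (s-1)| ≤ ε := by
      rw [abs_mul, _root_.abs_of_nonneg ht.1, hsδ]
      nlinarith [ht.2, hεpos]
    constructor <;> [nlinarith [abs_le.mp h1] ; nlinarith [abs_le.mp h1]]
  have hℓK : ∀ t ∈ Set.Icc (0:ℝ) 1, ℓ t ∈ K := by
    intro t ht
    obtain ⟨h1, h2⟩ := hrange t ht
    have habs : ‖ℓ t‖ = 1 + t * (s-1) := by
      rw [hℓabs t, _root_.abs_of_nonneg (by linarith)]
    constructor <;> rw [habs] <;> linarith
  have hℓU : ∀ t ∈ Set.Icc (0:ℝ) 1, ℓ t ∈ U := fun t ht => hsub (hℓK t ht)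
  have hℓdist : ∀ t ∈ Set.Icc (0:ℝ) 1, dist (ℓ t) w ≤ ε := by
    intro t ht
    rw [Complex.dist_eq]
    have : ℓ t - w = ↑t * ((↑s:ℂ) - 1) * w := by rw [hℓdef]; ring
    rw [this, norm_mul, norm_mul, hw, mul_one, Complex.norm_real, Real.norm_eq_abs]
    have : ‖(↑s:ℂ) - 1‖ = |s - 1| := by
      rw [show ((↑s:ℂ) - 1) = ((s - 1 : ℝ) : ℂ) by push_cast; ring, Complex.norm_real, Real.norm_eq_abs]
    rw [this, hsδ, _root_.abs_of_nonneg ht.1]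
    nlinarith [ht.2, hεpos]
  have hwK : w ∈ K := by
    constructor <;> rw [hw] <;> linarith
  have hderiv_close : ∀ t ∈ Set.Icc (0:ℝ) 1,
      ‖deriv τ (ℓ t) - deriv τ w‖ < δ := by
    intro t ht
    rw [← Complex.dist_eq]
    apply hUC _ (hKK' (hℓK t ht)) _ (hKK' hwK)
    calc dist (ℓ t) w ≤ ε := hℓdist t ht
      _ ≤ ε₀/2 := hε4
      _ < ε₀ := by linarith
  -- Taylor estimate via mean value inequality
  have hℓD : ∀ t : ℝ, HasDerivAt ℓ (((↑s:ℂ) - 1) * w) t := by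
    intro t
    have h1 : HasDerivAt (fun t : ℝ => (↑t : ℂ) * ((↑s:ℂ) - 1)) ((↑s:ℂ) - 1) t := by
      simpa using (Complex.ofRealCLM.hasDerivAt (x := t)).mul_const ((↑s:ℂ) - 1)
    simpa using ((h1.const_add 1).mul_const w)
  have hcomp : ∀ t ∈ Set.Icc (0:ℝ) 1,
      HasDerivAt (fun t => τ (ℓ t)) (deriv τ (ℓ t) * (((↑s:ℂ) - 1) * w)) t := by
    intro t ht
    have hd := ((hdiff _ (hℓU t ht)).hasDerivAt).complexToReal_fderiv
    have := hd.comp_hasDerivAt t (hℓD t)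
    simpa [Function.comp_def, smul_eq_mul, mul_comm] using this
  set C₀ : ℂ := deriv τ w * (((↑s:ℂ) - 1) * w) with hC₀def
  have hmvt := norm_image_sub_le_of_norm_deriv_le_segment' (a := (0:ℝ)) (b := 1)
      (f := fun t => τ (ℓ t) - t • C₀)
      (f' := fun t => deriv τ (ℓ t) * (((↑s:ℂ) - 1) * w) - C₀) (C := δ * ε)
      (fun t ht => (((hcomp t ht).sub
        (((hasDerivAt_id t).smul_const C₀).congr_deriv (by simp)))).hasDerivWithinAt)
      (fun t ht => by
        show ‖deriv τ (ℓ t) * (((↑s:ℂ) - 1) * w) - C₀‖ ≤ δ * ε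
        have ht' : t ∈ Set.Icc (0:ℝ) 1 := ⟨ht.1, le_of_lt ht.2⟩
        have heq : deriv τ (ℓ t) * (((↑s:ℂ) - 1) * w) - C₀
            = (deriv τ (ℓ t) - deriv τ w) * (((↑s:ℂ) - 1) * w) := by
          rw [hC₀def]; ring
        rw [heq, norm_mul, norm_mul]
        have hs1 : ‖(↑s:ℂ) - 1‖ = ε := by
          rw [show ((↑s:ℂ) - 1) = ((s - 1 : ℝ) : ℂ) by push_cast; ring,
            Complex.norm_real, Real.norm_eq_abs, hsδ]
        rw [hs1, hw, mul_one]
        exact mul_le_mul (le_of_lt (hderiv_close t ht')) le_rfl (by linarith) hδ.le)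
      1 (by norm_num)
  simp only [one_smul, zero_smul, sub_zero, mul_one] at hmvt
  rw [hℓ0, hℓ1] at hmvt
  have hTay : ‖τ z - C₀ - τ w‖ ≤ δ * ε := by
    exact hmvt
  -- the tangency structure
  have hcirc : ∀ z : ℂ, ‖z‖ = 1 → z ∈ U := by
    intro z hz1
    apply hsub
    constructor <;> rw [hz1] <;> linarith
  set c : ℂ := (starRingEnd ℂ) (τ w) * w * deriv τ w with hcdef
  have hcim : c.im = 0 := circle_tangent hdiff hmod hcirc hw
  have hcre : c = ((c.re : ℝ) : ℂ) := by
    apply Complex.ext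
    · simp
    · simp [hcim]
  have hτw1 : ‖τ w‖ = 1 := hmod w hw
  have hunit : τ w * (starRingEnd ℂ) (τ w) = 1 := by
    rw [Complex.mul_conj]
    rw [← Complex.sq_norm, hτw1]
    norm_num
  have hA : τ w + C₀ = τ w * (1 + ((↑s:ℂ) - 1) * c) := by
    rw [hC₀def, hcdef]
    linear_combination (-(((↑s:ℂ) - 1) * w * deriv τ w)) * hunit
  have habsc : |c.re| = ‖deriv τ w‖ := by
    have h1 : ‖c‖ = ‖deriv τ w‖ := by
      rw [hcdef, norm_mul, norm_mul, Complex.norm_conj, hτw1, hw, one_mul, one_mul]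
    rw [← h1, hcre, Complex.norm_real, Real.norm_eq_abs]
    simp
  have hα' : α ≤ |c.re| := by
    rw [habsc]
    apply hexp <;> rw [hw] <;> linarith
  have hMc : |c.re| ≤ M := by
    rw [habsc]
    exact hM w (hKK' hwK)
  set x : ℝ := (s - 1) * c.re with hxdef
  have hxabs : |x| = ε * |c.re| := by rw [hxdef, abs_mul, hsδ]
  have hxα : α * ε ≤ |x| := by rw [hxabs]; nlinarith
  have hxM : |x| < 1 := by
    rw [hxabs]
    calc ε * |c.re| ≤ ε * M := by nlinarith
      _ < 1 := hεM
  have habsA : ‖τ w + C₀‖ = |1 + x| := by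
    rw [hA, norm_mul, hτw1, one_mul]
    have : (1 + ((↑s:ℂ) - 1) * c) = ((1 + x : ℝ) : ℂ) := by
      rw [hcre, hxdef]; push_cast; ring
    rw [this, Complex.norm_real, Real.norm_eq_abs]
  -- triangle inequality estimates
  have hlow : |1 + x| - δ * ε ≤ ‖τ z‖ := by
    have h1 : ‖τ w + C₀‖ - ‖τ z‖ ≤ ‖(τ w + C₀) - τ z‖ := norm_sub_norm_le _ _
    have h2 : (τ w + C₀) - τ z = -(τ z - C₀ - τ w) := by ring
    rw [h2, norm_neg] at h1
    rw [habsA] at h1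
    linarith [hTay]
  have hhigh : ‖τ z‖ ≤ |1 + x| + δ * ε := by
    have h1 : ‖τ z‖ - ‖τ w + C₀‖ ≤ ‖τ z - (τ w + C₀)‖ := norm_sub_norm_le _ _
    have h2 : τ z - (τ w + C₀) = τ z - C₀ - τ w := by ring
    rw [h2] at h1
    rw [habsA] at h1
    linarith [hTay]
  -- case analysis
  rcases le_or_gt 0 x with hx0 | hx0
  · right
    have hxval : α * ε ≤ x := by rwa [_root_.abs_of_nonneg hx0] at hxα
    have : |1 + x| = 1 + x := abs_of_nonneg (by linarith)
    rw [this] at hlow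
    have : δ * ε < (α - 1) * ε := by
      rw [hδdef]; nlinarith
    nlinarith
  · left
    have hxval : x ≤ -(α * ε) := by
      rw [_root_.abs_of_neg hx0] at hxα; linarith
    have h1x : 0 < 1 + x := by
      have := abs_lt.mp hxM; linarith [this.1]
    have : |1 + x| = 1 + x := _root_.abs_of_pos h1x
    rw [this] at hhigh
    nlinarith
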